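/- A Hausdorff band of topological groups S is metrizable if and only if S is first countable. -/

import Mathlib

open Set TopologicalSpace

/-- The principal left ideal (with `a` adjoined) generated by `a`: `{a} ∪ {s*a : s ∈ S}`. -/
def leftIdeal {S : Type*} [Semigroup S] (a : S) : Set S :=
  insert a {x | ∃ s, x = s * a}

/-- The principal right ideal (with `a` adjoined) generated by `a`: `{a} ∪ {a*s : s ∈ S}`. -/
def rightIdeal {S : Type*} [Semigroup S] (a : S) : Set S :=
  insert a {x | ∃ s, x = a * s}

/-- Green's relation ℋ on a semigroup. -/
def greenH {S : Type*} [Semigroup S] (a b : S) : Prop :=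
  leftIdeal a = leftIdeal b ∧ rightIdeal a = rightIdeal b

/-- The ℋ-class of an element. -/
def HClass {S : Type*} [Semigroup S] (x : S) : Set S := {y | greenH y x}

/-- A semigroup is completely regular if every element is completely regular. -/
def CompletelyRegularSemigroup (S : Type*) [Semigroup S] : Prop :=
  ∀ a : S, ∃ x, a = a * x * a ∧ a * x = x * a

/-- Green's relation ℋ is a congruence. -/
def HIsCongruence (S : Type*) [Semigroup S] : Prop :=
  ∀ a b c : S, greenH a b → greenH (a * c) (b * c) ∧ greenH (c * a) (c * b)

/-- A cryptogroup is a completely regular semigroup in which ℋ is a congruence. -/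
def IsCryptogroup (S : Type*) [Semigroup S] : Prop :=
  CompletelyRegularSemigroup S ∧ HIsCongruence S

/-- In a cryptogroup every ℋ-class is a group; `idp x` (written `x⁰`) is the identity of the
ℋ-class of `x`, and `inv x` (written `x⁻¹`) is the inverse of `x` inside its ℋ-class. -/
structure CryptoOps (S : Type*) [Semigroup S] where
  idp : S → S
  inv : S → S
  idp_mem : ∀ x, greenH (idp x) x
  idp_mul : ∀ x y, greenH y x → idp x * y = y
  mul_idp : ∀ x y, greenH y x → y * idp x = y
  inv_mem : ∀ x, greenH (inv x) x
  mul_inv : ∀ x, x * inv x = idp x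
  inv_mul : ∀ x, inv x * x = idp x

/-- The set `E(S)` of idempotents of a semigroup. -/
def idemSet (S : Type*) [Semigroup S] : Set S := {e | e * e = e}

/-- `(xU)* = {y ∈ S : x⁻¹*y ∈ U and x⁰ = y⁰}`. -/
def lstar {S : Type*} [Semigroup S] (ops : CryptoOps S) (x : S) (U : Set S) : Set S :=
  {y | ops.inv x * y ∈ U ∧ ops.idp x = ops.idp y}

/-- `(Ux)* = {y ∈ S : y*x⁻¹ ∈ U and x⁰ = y⁰}`. -/
def rstar {S : Type*} [Semigroup S] (ops : CryptoOps S) (U : Set S) (x : S) : Set S :=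
  {y | y * ops.inv x ∈ U ∧ ops.idp x = ops.idp y}

/-- `(AB)* = ⋃_{a ∈ A} (aB)*`. -/
def setStar {S : Type*} [Semigroup S] (ops : CryptoOps S) (A B : Set S) : Set S :=
  ⋃ a ∈ A, lstar ops a B

/-- A full subcryptogroup: contains all idempotents, and closed under multiplication
and inversion. -/
def IsFullSubcryptogroup {S : Type*} [Semigroup S] (ops : CryptoOps S) (K : Set S) : Prop :=
  idemSet S ⊆ K ∧ (∀ x ∈ K, ∀ y ∈ K, x * y ∈ K) ∧ (∀ x ∈ K, ops.inv x ∈ K)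

section Aux

variable {S : Type*} [Semigroup S]

theorem greenH_refl (a : S) : greenH a a := ⟨rfl, rfl⟩

theorem greenH_symm {a b : S} (h : greenH a b) : greenH b a := ⟨h.1.symm, h.2.symm⟩

theorem greenH_trans {a b c : S} (h1 : greenH a b) (h2 : greenH b c) : greenH a c :=
  ⟨h1.1.trans h2.1, h1.2.trans h2.2⟩

theorem greenH_mul_mem (ops : CryptoOps S) (hcong : HIsCongruence S) {x y z : S}
    (hy : greenH y x) (hz : greenH z x) : greenH (y * z) x := by
  have h1 : greenH (y * z) (x * z) := (hcong y x z hy).1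
  have h2 : greenH (x * z) (x * x) := (hcong z x x hz).2
  have h3 : greenH (x * ops.idp x) (x * x) := (hcong (ops.idp x) x x (ops.idp_mem x)).2
  rw [ops.mul_idp x x (greenH_refl x)] at h3
  exact greenH_trans h1 (greenH_trans h2 (greenH_symm h3))

theorem greenH_idp_eq (ops : CryptoOps S) {x y : S} (hyx : greenH y x) :
    ops.idp y = ops.idp x := by
  have h1 : ops.idp x * ops.idp y = ops.idp y :=
    ops.idp_mul x _ (greenH_trans (ops.idp_mem y) hyx)
  have h2 : ops.idp x * ops.idp y = ops.idp x :=
    ops.mul_idp y _ (greenH_trans (ops.idp_mem x) (greenH_symm hyx))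
  exact h1.symm.trans h2

/-- A T0 pseudometrizable space is metrizable. -/
theorem metrizable_of_t0_pseudoMetrizable {X : Type*} [TopologicalSpace X] [T0Space X]
    [h : PseudoMetrizableSpace X] : MetrizableSpace X := by
  letI : PseudoMetricSpace X := TopologicalSpace.pseudoMetrizableSpacePseudoMetric X
  letI : MetricSpace X := MetricSpace.ofT0PseudoMetricSpace X
  exact {}

/-- In a Hausdorff first countable cryptogroup with continuous multiplication and
inversion, every ℋ-class is metrizable (being a first countable Hausdorff topological
group). -/
theorem metrizable_HClass [TopologicalSpace S] [ContinuousMul S]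
    (ops : CryptoOps S) (hcrypt : IsCryptogroup S) (hinv : Continuous ops.inv)
    [T2Space S] [FirstCountableTopology S] (x : S) :
    MetrizableSpace (HClass x) := by
  letI : Group (HClass x) :=
    { mul := fun a b => ⟨(a : S) * b, greenH_mul_mem ops hcrypt.2 a.2 b.2⟩
      one := ⟨ops.idp x, ops.idp_mem x⟩
      inv := fun a => ⟨ops.inv a, greenH_trans (ops.inv_mem a) a.2⟩
      mul_assoc := fun a b c => Subtype.ext (mul_assoc (a : S) b c)
      one_mul := fun a => Subtype.ext (ops.idp_mul x a a.2)
      mul_one := fun a => Subtype.ext (ops.mul_idp x a a.2)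
      inv_mul_cancel := fun a => Subtype.ext <| by
        show ops.inv (a : S) * a = ops.idp x
        rw [ops.inv_mul, greenH_idp_eq ops a.2] }
  haveI : IsTopologicalGroup (HClass x) :=
    { continuous_mul := Continuous.subtype_mk
        (((continuous_subtype_val.comp continuous_fst).mul
          (continuous_subtype_val.comp continuous_snd))) _
      continuous_inv := Continuous.subtype_mk (hinv.comp continuous_subtype_val) _ }
  letI U : UniformSpace (HClass x) := IsTopologicalGroup.rightUniformSpace (HClass x)
  haveI : (uniformity (HClass x)).IsCountablyGenerated := by
    show (Filter.comap (fun p : HClass x × HClass x => p.2 * p.1⁻¹)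
      (nhds 1)).IsCountablyGenerated
    exact Filter.comap.isCountablyGenerated _ _
  haveI : PseudoMetrizableSpace (HClass x) := UniformSpace.pseudoMetrizableSpace
  exact metrizable_of_t0_pseudoMetrizable

end Aux

/-- A Hausdorff band of topological groups is metrizable iff it is first countable. -/
theorem stmt16 {S : Type*} [Semigroup S] [TopologicalSpace S] [ContinuousMul S]
    (ops : CryptoOps S) (hcrypt : IsCryptogroup S)
    (hinv : Continuous ops.inv) (hopen : ∀ x : S, IsOpen (HClass x))
    [T2Space S] :
    TopologicalSpace.MetrizableSpace S ↔ FirstCountableTopology S := by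
  constructor
  · intro h
    exact PseudoMetrizableSpace.firstCountableTopology
  · intro hfc
    letI sd : Setoid S := ⟨greenH, greenH_refl, greenH_symm, greenH_trans⟩
    let ι := Quotient sd
    let E : ι → Type _ := fun c => HClass c.out
    haveI : ∀ c : ι, MetrizableSpace (E c) := fun c =>
      metrizable_HClass ops hcrypt hinv c.out
    letI : ∀ c : ι, MetricSpace (E c) := fun c =>
      TopologicalSpace.metrizableSpaceMetric (E c)
    haveI hsm : MetrizableSpace (Σ c : ι, E c) := by
      letI := @Metric.Sigma.metricSpace ι E _; exact inferInstance
    let e : (Σ c : ι, E c) ≃ S :=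
      { toFun := fun p => (p.2 : S)
        invFun := fun s => ⟨Quotient.mk sd s, ⟨s, greenH_symm (Quotient.mk_out s)⟩⟩
        left_inv := by
          rintro ⟨c, y⟩
          have hc : Quotient.mk sd (y : S) = c :=
            (Quotient.sound y.2).trans (Quotient.out_eq c)
          refine Sigma.ext hc ?_
          rw [Subtype.heq_iff_coe_eq (fun z => by
            show z ∈ HClass (Quotient.out (Quotient.mk sd (y : S))) ↔
              z ∈ HClass (Quotient.out c)
            rw [hc])]
        right_inv := fun s => rfl }
    have hcont : Continuous e := continuous_sigma fun c => continuous_subtype_val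
    have hopenmap : IsOpenMap e :=
      isOpenMap_sigma.2 fun c => (hopen _).isOpenMap_subtype_val
    have he : (Σ c : ι, E c) ≃ₜ S := e.toHomeomorphOfContinuousOpen hcont hopenmap
    exact he.symm.isEmbedding.metrizableSpace
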